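/- Let X be a space with Property (T), and let X_0 be a coarse component of X, equipped with the restricted metric (so that X_0 is itself a bounded geometry, monogenic, coarsely connected metric space). Then X_0 has Property (T). -/

import Mathlib

open scoped ENNReal Classical

noncomputable section

namespace GeomPropT

variable {X : Type*}

/-- The tube of diameter `R` in `X × X`. -/
def Tube (X : Type*) [EMetricSpace X] (R : ℝ≥0∞) : Set (X × X) :=
  {p : X × X | edist p.1 p.2 ≤ R}

/-- A subset of `X × X` is controlled if it is contained in a tube of finite diameter. -/
def Controlled [EMetricSpace X] (E : Set (X × X)) : Prop :=
  ∃ R : ℝ≥0∞, R < ⊤ ∧ E ⊆ Tube X R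

/-- `X` has bounded geometry if balls of any given finite radius have uniformly
bounded cardinality. -/
def BoundedGeometry (X : Type*) [EMetricSpace X] : Prop :=
  ∀ R : ℝ≥0∞, R < ⊤ → ∃ N : ℕ, ∀ x : X,
    {y : X | edist x y ≤ R}.Finite ∧ {y : X | edist x y ≤ R}.ncard ≤ N

/-- Composition of subsets of `X × X`. -/
def compRel (E F : Set (X × X)) : Set (X × X) :=
  {p : X × X | ∃ z : X, (p.1, z) ∈ E ∧ (z, p.2) ∈ F}

/-- `compPow E n` is the `(n+1)`-fold composition `E^{∘(n+1)}`. -/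
def compPow (E : Set (X × X)) : ℕ → Set (X × X)
  | 0 => E
  | n + 1 => compRel E (compPow E n)

/-- A controlled set is generating if every controlled set is contained in some
iterated composition of it. -/
def Generating [EMetricSpace X] (E : Set (X × X)) : Prop :=
  Controlled E ∧ ∀ F : Set (X × X), Controlled F → ∃ n : ℕ, F ⊆ compPow E n

/-- `X` is monogenic if it admits a controlled generating set. -/
def Monogenic (X : Type*) [EMetricSpace X] : Prop :=
  ∃ E : Set (X × X), Generating E

/-- A "space": bounded geometry, monogenic, with at most countably many coarse
components. -/
structure IsSpace (X : Type*) [EMetricSpace X] : Prop where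
  boundedGeometry : BoundedGeometry X
  monogenic : Monogenic X
  countableComponents : Set.Countable {C : Set X | ∃ x : X, C = {y : X | edist x y < ⊤}}

/-- The support of a matrix. -/
def matSupport (T : X → X → ℂ) : Set (X × X) := {p : X × X | T p.1 p.2 ≠ 0}

/-- Membership in `ℂ_u[X]`: uniformly bounded entries and controlled support. -/
def CuElem [EMetricSpace X] (T : X → X → ℂ) : Prop :=
  (∃ M : ℝ, ∀ x y : X, ‖T x y‖ ≤ M) ∧ Controlled (matSupport T)

/-- The identity matrix. -/
def matOne : X → X → ℂ := fun x y => if x = y then 1 else 0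

/-- Matrix multiplication. -/
def matMul (T S : X → X → ℂ) : X → X → ℂ := fun x y => ∑' z : X, T x z * S z y

/-- Matrix adjoint. -/
def matStar (T : X → X → ℂ) : X → X → ℂ := fun x y => starRingEnd ℂ (T y x)

/-- Matrix powers. -/
def matPow (A : X → X → ℂ) : ℕ → X → X → ℂ
  | 0 => matOne
  | n + 1 => matMul A (matPow A n)

/-- A function `f ∈ ℓ∞(X)` viewed as a diagonal matrix. -/
def diag (f : X → ℂ) : X → X → ℂ := fun x y => if x = y then f x else 0

/-- The matrix of a partial translation: a `{0,1}`-matrix with at most one `1` in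
each row and each column, and controlled support. -/
def IsPartialTranslation [EMetricSpace X] (v : X → X → ℂ) : Prop :=
  (∀ x y : X, v x y = 0 ∨ v x y = 1) ∧
  (∀ x y y' : X, v x y = 1 → v x y' = 1 → y = y') ∧
  (∀ x x' y : X, v x y = 1 → v x' y = 1 → x = x') ∧
  Controlled (matSupport v)

/-- Membership in `S_X`: finite propagation permutation matrices. -/
def IsPermMatrix [EMetricSpace X] (A : X → X → ℂ) : Prop :=
  (∀ x y : X, A x y = 0 ∨ A x y = 1) ∧
  (∀ x : X, ∃! y : X, A x y = 1) ∧
  (∀ y : X, ∃! x : X, A x y = 1) ∧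
  Controlled (matSupport A)

/-- Membership in `A_X` with common row/column sum `c`. -/
def MemAX [EMetricSpace X] (A : X → X → ℂ) (c : ℂ) : Prop :=
  CuElem A ∧ ∀ x : X, HasSum (fun y => A x y) c ∧ HasSum (fun y => A y x) c

variable {H : Type*} [NormedAddCommGroup H] [InnerProductSpace ℂ H]

/-- A representation of `ℂ_u[X]`: a unital `*`-homomorphism into `B(H)`. -/
structure IsRepresentation [EMetricSpace X] [CompleteSpace H]
    (π : (X → X → ℂ) → (H →L[ℂ] H)) : Prop where
  map_one : π matOne = 1
  map_add : ∀ T S : X → X → ℂ, CuElem T → CuElem S → π (T + S) = π T + π S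
  map_smul : ∀ (c : ℂ) (T : X → X → ℂ), CuElem T → π (c • T) = c • π T
  map_mul : ∀ T S : X → X → ℂ, CuElem T → CuElem S → π (matMul T S) = π T * π S
  map_star : ∀ T : X → X → ℂ, CuElem T → π (matStar T) = ContinuousLinearMap.adjoint (π T)

/-- The subspace `H^π` of invariant vectors. -/
def invariantSubmodule [EMetricSpace X] (π : (X → X → ℂ) → (H →L[ℂ] H)) :
    Submodule ℂ H where
  carrier := {ξ : H | ∀ v : X → X → ℂ, IsPartialTranslation v →
    π v ξ = π (matMul v (matStar v)) ξ}
  add_mem' := by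
    intro a b ha hb v hv
    simp only [map_add, ha v hv, hb v hv]
  zero_mem' := by
    intro v hv
    simp
  smul_mem' := by
    intro c ξ hξ v hv
    simp only [map_smul, hξ v hv]

/-- `p` is the orthogonal projection onto `S`. -/
def IsOrthoProjOnto (p : H →L[ℂ] H) (S : Submodule ℂ H) : Prop :=
  ∀ ξ : H, p ξ ∈ S ∧ ξ - p ξ ∈ Sᗮ

/-- Geometric Property (T). -/
def HasPropertyT (X : Type*) [EMetricSpace X] : Prop :=
  ∀ E : Set (X × X), Generating E →
    ∃ c : ℝ, 0 < c ∧
      ∀ (H : Type) [NormedAddCommGroup H] [InnerProductSpace ℂ H] [CompleteSpace H]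
        (π : (X → X → ℂ) → (H →L[ℂ] H)), IsRepresentation π →
        ∀ ξ ∈ (invariantSubmodule π)ᗮ,
          ∃ v : X → X → ℂ, IsPartialTranslation v ∧ matSupport v ⊆ E ∧
            c * ‖ξ‖ ≤ ‖π v ξ - π (matMul v (matStar v)) ξ‖

/-- Bounded functions (elements of `ℓ∞(X)`). -/
def BddFun (f : X → ℂ) : Prop := ∃ M : ℝ, ∀ x : X, ‖f x‖ ≤ M

/-- `f ∘ t`, extended by `0`, where `t` is the partial translation with matrix `v`. -/
def translateFun (v : X → X → ℂ) (f : X → ℂ) : X → ℂ := fun y => ∑' x : X, v x y * f x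

/-- An invariant mean on `ℓ∞(X)`: a positive unital linear functional invariant
under partial translations. -/
def IsInvariantMean [EMetricSpace X] (φ : (X → ℂ) → ℂ) : Prop :=
  (∀ f g : X → ℂ, BddFun f → BddFun g → φ (f + g) = φ f + φ g) ∧
  (∀ (c : ℂ) (f : X → ℂ), BddFun f → φ (c • f) = c * φ f) ∧
  φ (fun _ => 1) = 1 ∧
  (∀ f : X → ℂ, BddFun f → (∀ x, 0 ≤ (f x).re ∧ (f x).im = 0) →
    0 ≤ (φ f).re ∧ (φ f).im = 0) ∧
  (∀ f : X → ℂ, BddFun f → ∀ v : X → X → ℂ, IsPartialTranslation v →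
    (∀ x : X, f x ≠ 0 → ∃ y : X, v x y = 1) → φ (translateFun v f) = φ f)

/-- `X` is amenable if `ℓ∞(X)` admits an invariant mean. -/
def IsAmenable (X : Type*) [EMetricSpace X] : Prop :=
  ∃ φ : (X → ℂ) → ℂ, IsInvariantMean φ

/-- A representation of `ℂ_u[X]` bundled with its Hilbert space. -/
structure HilbertRep (X : Type*) [EMetricSpace X] where
  H : Type
  [nacg : NormedAddCommGroup H]
  [ips : InnerProductSpace ℂ H]
  [cs : CompleteSpace H]
  π : (X → X → ℂ) → (H →L[ℂ] H)
  rep : IsRepresentation π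

attribute [instance] HilbertRep.nacg HilbertRep.ips HilbertRep.cs

/-! ### Auxiliary material for `statement2` -/

section Aux2

variable {Z : Type*}

/-- Off-diagonal part of a matrix. -/
def offd (v : Z → Z → ℂ) : Z → Z → ℂ := fun x y => if x = y then 0 else v x y

/-- Diagonal part of a matrix. -/
def diagp (v : Z → Z → ℂ) : Z → Z → ℂ := fun x y => if x = y then v x y else 0

lemma offd_add_diagp (v : Z → Z → ℂ) : offd v + diagp v = v := by
  funext x y
  by_cases h : x = y <;> simp [offd, diagp, h]

lemma offd_eq_one {v : Z → Z → ℂ} {x y : Z} (h : offd v x y = 1) : v x y = 1 := by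
  by_cases hxy : x = y
  · simp [offd, hxy] at h
  · simpa [offd, hxy] using h

lemma tsum_eq_zero_of_all {f : Z → ℂ} (h : ∀ z, f z = 0) : ∑' z, f z = 0 := by
  have : f = fun _ => (0 : ℂ) := funext h
  rw [this]
  exact tsum_zero

lemma mulStar_offdiag_zero (v : Z → Z → ℂ)
    (h01 : ∀ x y, v x y = 0 ∨ v x y = 1)
    (hcol : ∀ x x' y, v x y = 1 → v x' y = 1 → x = x')
    {x y : Z} (hxy : x ≠ y) : matMul v (matStar v) x y = 0 := by
  show (∑' z, v x z * matStar v z y) = 0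
  apply tsum_eq_zero_of_all
  intro z
  rcases h01 x z with h | h
  · simp [h]
  rcases h01 y z with h' | h'
  · simp [matStar, h']
  · exact absurd (hcol x y z h h') hxy

lemma mulStar_diag_01 (v : Z → Z → ℂ)
    (h01 : ∀ x y, v x y = 0 ∨ v x y = 1)
    (hrow : ∀ x y y', v x y = 1 → v x y' = 1 → y = y')
    (x : Z) : matMul v (matStar v) x x = 0 ∨ matMul v (matStar v) x x = 1 := by
  by_cases hex : ∃ z, v x z = 1
  · right
    obtain ⟨z0, hz0⟩ := hex
    show (∑' z, v x z * matStar v z x) = 1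
    rw [tsum_eq_single z0 (fun z hz => by
      rcases h01 x z with h | h
      · simp [h]
      · exact absurd (hrow x z z0 h hz0) hz)]
    simp [matStar, hz0]
  · left
    show (∑' z, v x z * matStar v z x) = 0
    apply tsum_eq_zero_of_all
    intro z
    rcases h01 x z with h | h
    · simp [h]
    · exact absurd ⟨z, h⟩ hex

lemma mulStar_split (v : Z → Z → ℂ)
    (h01 : ∀ x y, v x y = 0 ∨ v x y = 1)
    (hrow : ∀ x y y', v x y = 1 → v x y' = 1 → y = y')
    (hcol : ∀ x x' y, v x y = 1 → v x' y = 1 → x = x') :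
    matMul v (matStar v) = matMul (offd v) (matStar (offd v)) + diagp v := by
  funext x y
  show (∑' z, v x z * matStar v z y)
      = (∑' z, offd v x z * matStar (offd v) z y) + diagp v x y
  by_cases hxy : x = y
  · subst hxy
    by_cases hex : ∃ z, v x z = 1
    · obtain ⟨z0, hz0⟩ := hex
      have hL : (∑' z, v x z * matStar v z x) = 1 := by
        rw [tsum_eq_single z0 (fun z hz => by
          rcases h01 x z with h | h
          · simp [h]
          · exact absurd (hrow x z z0 h hz0) hz)]
        simp [matStar, hz0]
      by_cases hz0x : z0 = x
      · rw [hz0x] at hz0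
        have hR : (∑' z, offd v x z * matStar (offd v) z x) = 0 := by
          apply tsum_eq_zero_of_all
          intro z
          by_cases hzx : x = z
          · simp [offd, hzx]
          · rcases h01 x z with h | h
            · simp [offd, hzx, h]
            · exact absurd (hrow x z x h hz0).symm hzx
        rw [hL, hR]
        simp [diagp, hz0]
      · have hR : (∑' z, offd v x z * matStar (offd v) z x) = 1 := by
          rw [tsum_eq_single z0 (fun z hz => by
            by_cases hzx : x = z
            · simp [offd, hzx]
            · rcases h01 x z with h | h
              · simp [offd, hzx, h]
              · exact absurd (hrow x z z0 h hz0) hz)]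
          have hx0 : ¬ x = z0 := fun h => hz0x h.symm
          simp [offd, matStar, hx0, hz0]
        have hdd : diagp v x x = 0 := by
          rcases h01 x x with h | h
          · simp [diagp, h]
          · exact absurd (hrow x x z0 h hz0) (fun e => hz0x e.symm)
        rw [hL, hR, hdd]
        norm_num
    · push_neg at hex
      have hz : ∀ z, v x z = 0 := fun z => (h01 x z).resolve_right (hex z)
      have hL : (∑' z, v x z * matStar v z x) = 0 :=
        tsum_eq_zero_of_all (fun z => by simp [hz z])
      have hR : (∑' z, offd v x z * matStar (offd v) z x) = 0 :=
        tsum_eq_zero_of_all (fun z => by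
          by_cases hzx : x = z <;> simp [offd, hzx, hz z])
      rw [hL, hR]
      simp [diagp, hz x]
  · have hdd : diagp v x y = 0 := by simp [diagp, hxy]
    rw [hdd, add_zero]
    apply tsum_congr
    intro z
    by_cases hzx : z = x
    · subst hzx
      have hz : v z z * matStar v z y = 0 := by
        rcases h01 z z with h | h
        · simp [h]
        rcases h01 y z with h' | h'
        · simp [matStar, h']
        · exact absurd (hcol z y z h h') hxy
      rw [hz]
      simp [offd, matStar]
    · by_cases hzy : z = y
      · subst hzy
        have hz : v x z * matStar v z z = 0 := by
          rcases h01 z z with h | h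
          · simp [matStar, h]
          rcases h01 x z with h' | h'
          · simp [h']
          · exact absurd (hcol x z z h' h) hxy
        rw [hz]
        simp [offd, matStar]
      · have h1 : ¬ x = z := fun e => hzx e.symm
        have h2 : ¬ y = z := fun e => hzy e.symm
        simp [offd, matStar, h1, h2]

end Aux2

section AuxMetric

variable {X : Type*} [EMetricSpace X]

lemma controlled_mono {E F : Set (X × X)} (h : E ⊆ F) (hF : Controlled F) : Controlled E := by
  obtain ⟨R, hR, hs⟩ := hF
  exact ⟨R, hR, fun p hp => hs (h hp)⟩

lemma controlled_union {E F : Set (X × X)} (hE : Controlled E) (hF : Controlled F) :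
    Controlled (E ∪ F) := by
  obtain ⟨R, hR, hRs⟩ := hE
  obtain ⟨S, hS, hSs⟩ := hF
  refine ⟨max R S, max_lt hR hS, ?_⟩
  rintro p (hp | hp)
  · exact le_trans (show edist p.1 p.2 ≤ R from hRs hp) (le_max_left _ _)
  · exact le_trans (show edist p.1 p.2 ≤ S from hSs hp) (le_max_right _ _)

lemma controlled_diag : Controlled {p : X × X | p.1 = p.2} := by
  refine ⟨0, by simp, ?_⟩
  intro p hp
  show edist p.1 p.2 ≤ 0
  have h : p.1 = p.2 := hp
  rw [h, edist_self]

lemma edist_lt_top_of_controlled {E : Set (X × X)} (hE : Controlled E) {p : X × X}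
    (hp : p ∈ E) : edist p.1 p.2 < ⊤ := by
  obtain ⟨R, hR, hs⟩ := hE
  exact lt_of_le_of_lt (hs hp) hR

lemma mem_comp_trans {x₀ x z : X} (hx : edist x₀ x < ⊤) (hxz : edist x z < ⊤) :
    edist x₀ z < ⊤ :=
  lt_of_le_of_lt (edist_triangle x₀ x z) (ENNReal.add_lt_top.mpr ⟨hx, hxz⟩)

lemma compPow_mono_set {E F : Set (X × X)} (h : E ⊆ F) :
    ∀ n, compPow E n ⊆ compPow F n
  | 0 => h
  | n + 1 => fun p hp => by
      obtain ⟨z, h1, h2⟩ := hp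
      exact ⟨z, h h1, compPow_mono_set h n h2⟩

lemma compPow_mono_n {E : Set (X × X)} (hd : ∀ x : X, (x, x) ∈ E) {n m : ℕ}
    (h : n ≤ m) : compPow E n ⊆ compPow E m := by
  induction h with
  | refl => exact fun p hp => hp
  | step h ih =>
    intro p hp
    exact ⟨p.1, hd p.1, ih hp⟩

lemma compPow_outside (x₀ : X) {F : Set (X × X)} (hF : Controlled F) :
    ∀ n, ∀ p ∈ compPow F n, ¬ edist x₀ p.1 < ⊤ →
      p ∈ compPow {q : X × X | q ∈ F ∧ ¬ edist x₀ q.1 < ⊤} n := by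
  intro n
  induction n with
  | zero => exact fun p hp hout => ⟨hp, hout⟩
  | succ n ih =>
    rintro p ⟨z, h1, h2⟩ hout
    have hzout : ¬ edist x₀ z < ⊤ := by
      intro hz
      apply hout
      refine lt_of_le_of_lt (edist_triangle x₀ z p.1) (ENNReal.add_lt_top.mpr ⟨hz, ?_⟩)
      rw [edist_comm]
      exact edist_lt_top_of_controlled hF h1
    exact ⟨z, ⟨h1, hout⟩, ih (z, p.2) h2 hzout⟩

lemma compPow_image (x₀ : X)
    (E : Set ({y : X // edist x₀ y < ⊤} × {y : X // edist x₀ y < ⊤})) :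
    ∀ n, ∀ q ∈ compPow E n,
      ((q.1.1 : X), (q.2.1 : X)) ∈ compPow {p : X × X |
        ∃ a b : {y : X // edist x₀ y < ⊤}, (a, b) ∈ E ∧ (a : X) = p.1 ∧ (b : X) = p.2} n := by
  intro n
  induction n with
  | zero => exact fun q hq => ⟨q.1, q.2, hq, rfl, rfl⟩
  | succ n ih =>
    rintro q ⟨z, h1, h2⟩
    exact ⟨z.1, ⟨q.1, z, h1, rfl, rfl⟩, ih (z, q.2) h2⟩

/-- Restriction of a matrix to the coarse component of `x₀`. -/
def res (x₀ : X) (T : X → X → ℂ) :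
    {y : X // edist x₀ y < ⊤} → {y : X // edist x₀ y < ⊤} → ℂ :=
  fun x y => T x.1 y.1

lemma controlled_res (x₀ : X) {T : X → X → ℂ} (hT : Controlled (matSupport T)) :
    Controlled (matSupport (res x₀ T)) := by
  obtain ⟨R, hR, hs⟩ := hT
  refine ⟨R, hR, fun q hq => ?_⟩
  exact hs (show (q.1.1, q.2.1) ∈ matSupport T from hq)

lemma cuElem_res (x₀ : X) {T : X → X → ℂ} (hT : CuElem T) : CuElem (res x₀ T) := by
  obtain ⟨⟨M, hM⟩, hc⟩ := hT
  exact ⟨⟨M, fun x y => hM x.1 y.1⟩, controlled_res x₀ hc⟩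

lemma res_matMul (x₀ : X) {T S : X → X → ℂ} (hT : Controlled (matSupport T)) :
    res x₀ (matMul T S) = matMul (res x₀ T) (res x₀ S) := by
  funext x y
  show (∑' z : X, T x.1 z * S z y.1) = ∑' z : {y : X // edist x₀ y < ⊤}, T x.1 z.1 * S z.1 y.1
  refine (tsum_subtype_eq_of_support_subset (s := {y : X | edist x₀ y < ⊤}) ?_).symm
  intro z hz
  have hTz : T x.1 z ≠ 0 := by
    intro h
    exact hz (show T x.1 z * S z y.1 = 0 by rw [h, zero_mul])
  exact mem_comp_trans x.2 (edist_lt_top_of_controlled hT (show (x.1, z) ∈ matSupport T from hTz))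

lemma res_matStar (x₀ : X) (T : X → X → ℂ) : res x₀ (matStar T) = matStar (res x₀ T) := rfl

lemma res_add (x₀ : X) (T S : X → X → ℂ) : res x₀ (T + S) = res x₀ T + res x₀ S := rfl

lemma res_smul (x₀ : X) (c : ℂ) (T : X → X → ℂ) : res x₀ (c • T) = c • res x₀ T := rfl

lemma res_matOne (x₀ : X) : res x₀ (matOne : X → X → ℂ) = matOne := by
  funext x y
  by_cases h : x = y
  · simp [res, matOne, h]
  · have h' : ¬ x.1 = y.1 := fun e => h (Subtype.ext e)
    simp [res, matOne, h, h']

lemma isPT_res (x₀ : X) {v : X → X → ℂ} (hv : IsPartialTranslation v) :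
    IsPartialTranslation (res x₀ v) := by
  obtain ⟨h01, hrow, hcol, hc⟩ := hv
  exact ⟨fun x y => h01 x.1 y.1,
    fun x y y' h h' => Subtype.ext (hrow x.1 y.1 y'.1 h h'),
    fun x x' y h h' => Subtype.ext (hcol x.1 x'.1 y.1 h h'),
    controlled_res x₀ hc⟩

/-- Extension of a matrix on the coarse component of `x₀` by zero. -/
def ext0 (x₀ : X) (S : {y : X // edist x₀ y < ⊤} → {y : X // edist x₀ y < ⊤} → ℂ) :
    X → X → ℂ := fun x y =>
  if h : edist x₀ x < ⊤ ∧ edist x₀ y < ⊤ then S ⟨x, h.1⟩ ⟨y, h.2⟩ else 0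

lemma res_ext0 (x₀ : X) (S : {y : X // edist x₀ y < ⊤} → {y : X // edist x₀ y < ⊤} → ℂ) :
    res x₀ (ext0 x₀ S) = S := by
  funext x y
  show ext0 x₀ S x.1 y.1 = S x y
  rw [ext0, dif_pos ⟨x.2, y.2⟩]

lemma ext0_eq_one {x₀ : X} {S : {y : X // edist x₀ y < ⊤} → {y : X // edist x₀ y < ⊤} → ℂ}
    {x y : X} (h : ext0 x₀ S x y = 1) :
    ∃ (hx : edist x₀ x < ⊤) (hy : edist x₀ y < ⊤), S ⟨x, hx⟩ ⟨y, hy⟩ = 1 := by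
  rw [ext0] at h
  split at h
  · next hc => exact ⟨hc.1, hc.2, h⟩
  · exact absurd h.symm one_ne_zero

lemma controlled_ext0 (x₀ : X)
    {S : {y : X // edist x₀ y < ⊤} → {y : X // edist x₀ y < ⊤} → ℂ}
    (hc : Controlled (matSupport S)) : Controlled (matSupport (ext0 x₀ S)) := by
  obtain ⟨R, hR, hs⟩ := hc
  refine ⟨R, hR, fun p hp => ?_⟩
  have hp' : ext0 x₀ S p.1 p.2 ≠ 0 := hp
  rw [ext0] at hp'
  split at hp'
  · next h =>
    exact hs (show (⟨p.1, h.1⟩, ⟨p.2, h.2⟩) ∈ matSupport S from hp')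
  · exact absurd rfl hp'

lemma isPT_ext0 (x₀ : X) {w : {y : X // edist x₀ y < ⊤} → {y : X // edist x₀ y < ⊤} → ℂ}
    (hw : IsPartialTranslation w) : IsPartialTranslation (ext0 x₀ w) := by
  obtain ⟨h01, hrow, hcol, hc⟩ := hw
  refine ⟨?_, ?_, ?_, controlled_ext0 x₀ hc⟩
  · intro x y
    rw [ext0]
    split
    · exact h01 _ _
    · exact Or.inl rfl
  · intro x y y' h h'
    obtain ⟨hx, hy, hS⟩ := ext0_eq_one h
    obtain ⟨hx', hy', hS'⟩ := ext0_eq_one h'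
    exact congrArg Subtype.val (hrow ⟨x, hx⟩ ⟨y, hy⟩ ⟨y', hy'⟩ hS hS')
  · intro x x' y h h'
    obtain ⟨hx, hy, hS⟩ := ext0_eq_one h
    obtain ⟨hx', hy', hS'⟩ := ext0_eq_one h'
    exact congrArg Subtype.val (hcol ⟨x, hx⟩ ⟨x', hx'⟩ ⟨y, hy⟩ hS hS')

lemma isPT_offd {v : X → X → ℂ} (hv : IsPartialTranslation v) :
    IsPartialTranslation (offd v) := by
  obtain ⟨h01, hrow, hcol, hc⟩ := hv
  refine ⟨?_, ?_, ?_, ?_⟩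
  · intro x y
    by_cases h : x = y
    · exact Or.inl (by simp [offd, h])
    · simpa [offd, h] using h01 x y
  · exact fun x y y' h h' => hrow x y y' (offd_eq_one h) (offd_eq_one h')
  · exact fun x x' y h h' => hcol x x' y (offd_eq_one h) (offd_eq_one h')
  · refine controlled_mono ?_ hc
    intro p hp
    have hp' : offd v p.1 p.2 ≠ 0 := hp
    show v p.1 p.2 ≠ 0
    by_cases h : p.1 = p.2
    · exact absurd (by simp [offd, h]) hp'
    · intro h0
      exact hp' (by simp [offd, h, h0])

lemma cuElem_of_01 {A : X → X → ℂ} (h01 : ∀ x y, A x y = 0 ∨ A x y = 1)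
    (hc : Controlled (matSupport A)) : CuElem A := by
  refine ⟨⟨1, fun x y => ?_⟩, hc⟩
  rcases h01 x y with h | h <;> simp [h]

lemma cuElem_mulStar_pt {v : X → X → ℂ} (hv : IsPartialTranslation v) :
    CuElem (matMul v (matStar v)) := by
  obtain ⟨h01, hrow, hcol, hc⟩ := hv
  refine ⟨⟨1, fun x y => ?_⟩, ?_⟩
  · by_cases h : x = y
    · subst h
      rcases mulStar_diag_01 v h01 hrow x with h | h <;> simp [h]
    · simp [mulStar_offdiag_zero v h01 hcol h]
  · refine controlled_mono ?_ controlled_diag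
    intro p hp
    show p.1 = p.2
    by_contra hne
    exact hp (mulStar_offdiag_zero v h01 hcol hne)

lemma isRep_res (x₀ : X) {H : Type*} [NormedAddCommGroup H] [InnerProductSpace ℂ H]
    [CompleteSpace H]
    {π₀ : ({y : X // edist x₀ y < ⊤} → {y : X // edist x₀ y < ⊤} → ℂ) → (H →L[ℂ] H)}
    (h : IsRepresentation π₀) :
    IsRepresentation (fun T : X → X → ℂ => π₀ (res x₀ T)) := by
  constructor
  · show π₀ (res x₀ matOne) = 1
    rw [res_matOne]
    exact h.map_one
  · intro T S hT hS
    show π₀ (res x₀ (T + S)) = _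
    rw [res_add x₀ T S]
    exact h.map_add _ _ (cuElem_res x₀ hT) (cuElem_res x₀ hS)
  · intro c T hT
    show π₀ (res x₀ (c • T)) = _
    rw [res_smul]
    exact h.map_smul c _ (cuElem_res x₀ hT)
  · intro T S hT hS
    show π₀ (res x₀ (matMul T S)) = _
    rw [res_matMul x₀ hT.2]
    exact h.map_mul _ _ (cuElem_res x₀ hT) (cuElem_res x₀ hS)
  · intro T hT
    show π₀ (res x₀ (matStar T)) = _
    rw [res_matStar]
    exact h.map_star _ (cuElem_res x₀ hT)

lemma inv_eq (x₀ : X) {H : Type*} [NormedAddCommGroup H] [InnerProductSpace ℂ H]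
    [CompleteSpace H]
    {π₀ : ({y : X // edist x₀ y < ⊤} → {y : X // edist x₀ y < ⊤} → ℂ) → (H →L[ℂ] H)}
    (hrep : IsRepresentation π₀) :
    invariantSubmodule (fun T : X → X → ℂ => π₀ (res x₀ T)) = invariantSubmodule π₀ := by
  ext ξ
  constructor
  · intro hξ w hw
    have h := hξ (ext0 x₀ w) (isPT_ext0 x₀ hw)
    have h' : π₀ (res x₀ (ext0 x₀ w)) ξ
        = π₀ (res x₀ (matMul (ext0 x₀ w) (matStar (ext0 x₀ w)))) ξ := h
    rwa [res_matMul x₀ (isPT_ext0 x₀ hw).2.2.2, res_matStar, res_ext0] at h'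
  · intro hξ v hv
    show π₀ (res x₀ v) ξ = π₀ (res x₀ (matMul v (matStar v))) ξ
    rw [res_matMul x₀ hv.2.2.2, res_matStar]
    exact hξ (res x₀ v) (isPT_res x₀ hv)

lemma generating_extend (x₀ : X) (hX : Monogenic X)
    {E : Set ({y : X // edist x₀ y < ⊤} × {y : X // edist x₀ y < ⊤})} (hE : Generating E) :
    ∃ E' : Set (X × X), Generating E' ∧
      ∀ q : {y : X // edist x₀ y < ⊤} × {y : X // edist x₀ y < ⊤},
        ((q.1 : X), (q.2 : X)) ∈ E' → q.1 ≠ q.2 → q ∈ E := by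
  obtain ⟨F, hF⟩ := hX
  set E' : Set (X × X) := {p : X × X | ∃ a b : {y : X // edist x₀ y < ⊤},
      (a, b) ∈ E ∧ (a : X) = p.1 ∧ (b : X) = p.2} ∪
    ({q : X × X | q ∈ F ∧ ¬ edist x₀ q.1 < ⊤} ∪ {p : X × X | p.1 = p.2}) with hE'
  have hd : ∀ x : X, (x, x) ∈ E' := fun x => Or.inr (Or.inr rfl)
  have hsub1 : {p : X × X | ∃ a b : {y : X // edist x₀ y < ⊤},
      (a, b) ∈ E ∧ (a : X) = p.1 ∧ (b : X) = p.2} ⊆ E' := fun r hr => Or.inl hr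
  have hsub2 : {q : X × X | q ∈ F ∧ ¬ edist x₀ q.1 < ⊤} ⊆ E' := fun r hr => Or.inr (Or.inl hr)
  refine ⟨E', ⟨?_, ?_⟩, ?_⟩
  · refine controlled_union ?_ (controlled_union ?_ controlled_diag)
    · obtain ⟨R, hR, hs⟩ := hE.1
      refine ⟨R, hR, ?_⟩
      rintro p ⟨a, b, hab, ha, hb⟩
      show edist p.1 p.2 ≤ R
      rw [← ha, ← hb]
      exact hs hab
    · exact controlled_mono (fun q hq => hq.1) hF.1
  · intro F' hF'
    obtain ⟨n₂, hn₂⟩ := hF.2 F' hF'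
    have hGctrl : Controlled {q : {y : X // edist x₀ y < ⊤} × {y : X // edist x₀ y < ⊤} |
        ((q.1 : X), (q.2 : X)) ∈ F'} := by
      obtain ⟨R, hR, hs⟩ := hF'
      exact ⟨R, hR, fun q hq => hs hq⟩
    obtain ⟨n₁, hn₁⟩ := hE.2 _ hGctrl
    refine ⟨max n₁ n₂, ?_⟩
    intro p hp
    by_cases hx : edist x₀ p.1 < ⊤
    · have hy : edist x₀ p.2 < ⊤ := mem_comp_trans hx (edist_lt_top_of_controlled hF' hp)
      have hq : ((⟨p.1, hx⟩ : {y : X // edist x₀ y < ⊤}), (⟨p.2, hy⟩ : {y : X // edist x₀ y < ⊤}))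
          ∈ {q : {y : X // edist x₀ y < ⊤} × {y : X // edist x₀ y < ⊤} |
              ((q.1 : X), (q.2 : X)) ∈ F'} := hp
      have himg := compPow_image x₀ E n₁ _ (hn₁ hq)
      refine compPow_mono_n hd (le_max_left n₁ n₂) ?_
      exact compPow_mono_set hsub1 n₁ himg
    · have h2 := compPow_outside x₀ hF.1 n₂ p (hn₂ hp) hx
      refine compPow_mono_n hd (le_max_right n₁ n₂) ?_
      exact compPow_mono_set hsub2 n₂ h2
  · intro q hq hne
    rw [hE'] at hq
    rcases hq with ⟨a, b, hab, ha, hb⟩ | hF2 | hdiag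
    · rwa [show a = q.1 from Subtype.ext ha, show b = q.2 from Subtype.ext hb] at hab
    · exact absurd q.1.2 hF2.2
    · exact absurd (Subtype.ext hdiag) hne

end AuxMetric


/-- If a space `X` has Property (T), then so does every coarse
component `X₀` of `X` (with the restricted metric). -/
theorem statement2 {X : Type*} [EMetricSpace X] (hX : IsSpace X) (hT : HasPropertyT X)
    (x₀ : X) : HasPropertyT {y : X // edist x₀ y < ⊤} := by
  intro E hE
  obtain ⟨E', hE'gen, hE'prop⟩ := generating_extend x₀ hX.monogenic hE
  obtain ⟨c, hc, hmain⟩ := hT E' hE'gen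
  refine ⟨c, hc, ?_⟩
  intro H _ _ _ π₀ hrep ξ hξ
  have hξ' : ξ ∈ (invariantSubmodule (fun T : X → X → ℂ => π₀ (res x₀ T)))ᗮ := by
    rw [inv_eq x₀ hrep]
    exact hξ
  obtain ⟨v, hv, hsupp, hbound⟩ :=
    hmain H (fun T : X → X → ℂ => π₀ (res x₀ T)) (isRep_res x₀ hrep) ξ hξ'
  have hr : IsPartialTranslation (res x₀ v) := isPT_res x₀ hv
  have hu : IsPartialTranslation (offd (res x₀ v)) := isPT_offd hr
  refine ⟨offd (res x₀ v), hu, ?_, ?_⟩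
  · intro q hq
    have hq' : offd (res x₀ v) q.1 q.2 ≠ 0 := hq
    by_cases hdq : q.1 = q.2
    · exact absurd (by simp [offd, hdq]) hq'
    · have hv0 : v q.1.1 q.2.1 ≠ 0 := by
        intro h0
        exact hq' (by simp [offd, hdq, res, h0])
      exact hE'prop q (hsupp hv0) hdq
  · have hcu_u : CuElem (offd (res x₀ v)) := cuElem_of_01 hu.1 hu.2.2.2
    have hcu_d : CuElem (diagp (res x₀ v)) := by
      refine cuElem_of_01 ?_ ?_
      · intro x y
        by_cases h : x = y
        · simpa [diagp, h] using hr.1 x y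
        · exact Or.inl (by simp [diagp, h])
      · refine controlled_mono ?_ hr.2.2.2
        intro p hp
        have hp' : diagp (res x₀ v) p.1 p.2 ≠ 0 := hp
        show res x₀ v p.1 p.2 ≠ 0
        by_cases h : p.1 = p.2
        · intro h0
          have h0' : res x₀ v p.2 p.2 = 0 := by rw [h] at h0; exact h0
          exact hp' (by simp [diagp, h, h0'])
        · exact absurd (by simp [diagp, h]) hp'
    have hcu_m : CuElem (matMul (offd (res x₀ v)) (matStar (offd (res x₀ v)))) :=
      cuElem_mulStar_pt hu
    have e1 : π₀ (res x₀ v) = π₀ (offd (res x₀ v)) + π₀ (diagp (res x₀ v)) := by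
      conv_lhs => rw [← offd_add_diagp (res x₀ v)]
      exact hrep.map_add _ _ hcu_u hcu_d
    have e2 : π₀ (res x₀ (matMul v (matStar v)))
        = π₀ (matMul (offd (res x₀ v)) (matStar (offd (res x₀ v)))) + π₀ (diagp (res x₀ v)) := by
      rw [res_matMul x₀ hv.2.2.2, res_matStar,
        mulStar_split (res x₀ v) hr.1 hr.2.1 hr.2.2.1]
      exact hrep.map_add _ _ hcu_m hcu_d
    have key : π₀ (res x₀ v) ξ - π₀ (res x₀ (matMul v (matStar v))) ξ
        = π₀ (offd (res x₀ v)) ξ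
          - π₀ (matMul (offd (res x₀ v)) (matStar (offd (res x₀ v)))) ξ := by
      rw [e1, e2]
      simp only [ContinuousLinearMap.add_apply]
      abel
    calc c * ‖ξ‖ ≤ ‖π₀ (res x₀ v) ξ - π₀ (res x₀ (matMul v (matStar v))) ξ‖ := hbound
      _ = _ := by rw [key]

end GeomPropT
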